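/- Let G be a triangle-free graph on n vertices. Then for every λ > 0, P_G(λ) ≥ max{ (1+λ)^D, exp( (n/(2D))·W(D·log(1+λ))² ) }, where D is the maximum degree of G (assume D ≥ 1). -/

import Mathlib

open Finset MeasureTheory Real
open scoped Classical

noncomputable def indSets {V : Type*} [Fintype V] (G : SimpleGraph V) : Finset (Finset V) :=
  Finset.univ.filter (fun s => ∀ u ∈ s, ∀ v ∈ s, ¬ G.Adj u v)

/-- The independence polynomial (hard-core partition function). -/
noncomputable def indPoly {V : Type*} [Fintype V] (G : SimpleGraph V) (x : ℝ) : ℝ :=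
  ∑ s ∈ indSets G, x ^ s.card

/-- Expected size of an independent set from the hard-core model at fugacity x. -/
noncomputable def avgSize {V : Type*} [Fintype V] (G : SimpleGraph V) (x : ℝ) : ℝ :=
  x * deriv (indPoly G) x / indPoly G x

namespace HCAux

lemma sum_pow_powerset {α : Type*} [DecidableEq α] (u : Finset α) (t : ℝ) :
    ∑ K ∈ u.powerset, t ^ K.card = (1 + t) ^ u.card := by
  induction u using Finset.induction_on with
  | empty => simp
  | @insert a s ha ih =>
    have hinj : ∀ K ∈ s.powerset, ∀ K' ∈ s.powerset,
        insert a K = insert a K' → K = K' := by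
      intro K hK K' hK' h
      have hKa : a ∉ K := fun h' => ha (Finset.mem_powerset.1 hK h')
      have hK'a : a ∉ K' := fun h' => ha (Finset.mem_powerset.1 hK' h')
      rw [← Finset.erase_insert hKa, ← Finset.erase_insert hK'a, h]
    have hdisj : Disjoint s.powerset (s.powerset.image (insert a)) := by
      refine Finset.disjoint_left.2 fun K hK hK2 => ?_
      obtain ⟨K', _, rfl⟩ := Finset.mem_image.1 hK2
      exact ha (Finset.mem_powerset.1 hK (Finset.mem_insert_self a K'))
    rw [Finset.powerset_insert, Finset.sum_union hdisj, Finset.sum_image hinj]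
    have h1 : ∀ K ∈ s.powerset, t ^ (insert a K).card = t * t ^ K.card := by
      intro K hK
      rw [Finset.card_insert_of_notMem (fun h => ha ((Finset.mem_powerset.1 hK) h)),
        pow_succ]
      ring
    rw [Finset.sum_congr rfl h1, ← Finset.mul_sum, ih,
      Finset.card_insert_of_notMem ha, pow_succ]
    ring

lemma sum_card_pow_powerset {α : Type*} [DecidableEq α] (u : Finset α) (t : ℝ) :
    ∑ K ∈ u.powerset, (K.card : ℝ) * t ^ K.card
      = (u.card : ℝ) * t * (1 + t) ^ (u.card - 1) := by
  induction u using Finset.induction_on with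
  | empty => simp
  | @insert a s ha ih =>
    have hinj : ∀ K ∈ s.powerset, ∀ K' ∈ s.powerset,
        insert a K = insert a K' → K = K' := by
      intro K hK K' hK' h
      have hKa : a ∉ K := fun h' => ha (Finset.mem_powerset.1 hK h')
      have hK'a : a ∉ K' := fun h' => ha (Finset.mem_powerset.1 hK' h')
      rw [← Finset.erase_insert hKa, ← Finset.erase_insert hK'a, h]
    have hdisj : Disjoint s.powerset (s.powerset.image (insert a)) := by
      refine Finset.disjoint_left.2 fun K hK hK2 => ?_
      obtain ⟨K', _, rfl⟩ := Finset.mem_image.1 hK2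
      exact ha (Finset.mem_powerset.1 hK (Finset.mem_insert_self a K'))
    rw [Finset.powerset_insert, Finset.sum_union hdisj, Finset.sum_image hinj]
    have h1 : ∀ K ∈ s.powerset, ((insert a K).card : ℝ) * t ^ (insert a K).card
        = t * ((K.card : ℝ) * t ^ K.card) + t * t ^ K.card := by
      intro K hK
      rw [Finset.card_insert_of_notMem (fun h => ha ((Finset.mem_powerset.1 hK) h))]
      push_cast
      ring
    rw [Finset.sum_congr rfl h1, Finset.sum_add_distrib, ← Finset.mul_sum, ← Finset.mul_sum,
      ih, sum_pow_powerset, Finset.card_insert_of_notMem ha]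
    have key : (1 + t) * ((s.card : ℝ) * t * (1 + t) ^ (s.card - 1))
        = (s.card : ℝ) * t * (1 + t) ^ s.card := by
      rcases Nat.eq_zero_or_pos s.card with h | h
      · simp [h]
      · obtain ⟨m, hm⟩ := Nat.exists_eq_succ_of_ne_zero h.ne'
        rw [hm, Nat.succ_sub_one, pow_succ]
        push_cast
        ring
    have : ((s.card + 1 : ℕ) : ℝ) = (s.card : ℝ) + 1 := by push_cast; ring
    rw [this, Nat.add_sub_cancel]
    nlinarith [key, ih]

end HCAux

section Fiber

variable {V : Type*} [Fintype V] {G : SimpleGraph V}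

lemma memN {v u : V} : u ∈ G.neighborFinset v ↔ G.Adj v u := by
  simp [SimpleGraph.mem_neighborFinset]

lemma mem_indSets {s : Finset V} :
    s ∈ indSets G ↔ ∀ u ∈ s, ∀ v ∈ s, ¬ G.Adj u v := by
  simp [indSets]

/-- closed neighborhood as a Finset -/
noncomputable def Mv (G : SimpleGraph V) (v : V) : Finset V :=
  insert v (G.neighborFinset v)

noncomputable def extSets (G : SimpleGraph V) (v : V) : Finset (Finset V) :=
  (indSets G).filter fun J => Disjoint J (Mv G v)

/-- neighbors of `v` uncovered by the external independent set `J` -/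
noncomputable def unc (G : SimpleGraph V) (v : V) (J : Finset V) : Finset V :=
  (G.neighborFinset v).filter fun u => ∀ j ∈ J, ¬ G.Adj u j

lemma extSets_spec {v : V} {J : Finset V} (hJ : J ∈ extSets G v) :
    (∀ u ∈ J, ∀ w ∈ J, ¬ G.Adj u w) ∧ v ∉ J ∧ ∀ j ∈ J, ¬ G.Adj v j := by
  rw [extSets, Finset.mem_filter] at hJ
  refine ⟨mem_indSets.1 hJ.1, ?_, ?_⟩
  · exact fun h => Finset.disjoint_left.1 hJ.2 h (Finset.mem_insert_self _ _)
  · intro j hj hadj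
    exact Finset.disjoint_left.1 hJ.2 hj
      (Finset.mem_insert_of_mem (memN.2 hadj))

lemma maps_to_ext (v : V) : ∀ s ∈ indSets G, s \ Mv G v ∈ extSets G v := by
  intro s hs
  rw [extSets, Finset.mem_filter]
  refine ⟨?_, Finset.sdiff_disjoint⟩
  rw [mem_indSets] at hs ⊢
  exact fun u hu w hw => hs u (Finset.mem_sdiff.1 hu).1 w (Finset.mem_sdiff.1 hw).1

lemma fiber_eq (htf : G.CliqueFree 3) (v : V) {J : Finset V} (hJ : J ∈ extSets G v) :
    (indSets G).filter (fun s => s \ Mv G v = J)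
      = insert (insert v J) ((unc G v J).powerset.image fun K => J ∪ K) := by
  obtain ⟨hJind, hvJ, hJN⟩ := extSets_spec hJ
  have hJM : ∀ j ∈ J, j ∉ Mv G v := by
    intro j hj hjM
    rcases Finset.mem_insert.1 hjM with rfl | hjN
    · exact hvJ hj
    · exact hJN j hj (memN.1 hjN)
  ext s
  rw [Finset.mem_filter, Finset.mem_insert, Finset.mem_image]
  constructor
  · rintro ⟨hs, hdiff⟩
    have hsind := mem_indSets.1 hs
    have hJs : ∀ j ∈ J, j ∈ s := by
      intro j hj
      have : j ∈ s \ Mv G v := hdiff ▸ hj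
      exact (Finset.mem_sdiff.1 this).1
    by_cases hv : v ∈ s
    · left
      ext a
      constructor
      · intro ha
        by_cases hav : a = v
        · exact hav ▸ Finset.mem_insert_self v J
        · have haN : a ∉ G.neighborFinset v := by
            intro h
            exact hsind v hv a ha (memN.1 h)
          have haM : a ∉ Mv G v := by
            rw [Mv, Finset.mem_insert]; tauto
          have : a ∈ s \ Mv G v := Finset.mem_sdiff.2 ⟨ha, haM⟩
          exact Finset.mem_insert_of_mem (hdiff ▸ this)
      · intro ha
        rcases Finset.mem_insert.1 ha with rfl | haJ
        · exact hv
        · exact hJs a haJ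
    · right
      refine ⟨s ∩ G.neighborFinset v, ?_, ?_⟩
      · rw [Finset.mem_powerset]
        intro u hu
        rw [unc, Finset.mem_filter]
        refine ⟨(Finset.mem_inter.1 hu).2, fun j hj => ?_⟩
        exact hsind u (Finset.mem_inter.1 hu).1 j (hJs j hj)
      · ext a
        constructor
        · intro ha
          rcases Finset.mem_union.1 ha with haJ | haK
          · exact hJs a haJ
          · exact (Finset.mem_inter.1 haK).1
        · intro ha
          by_cases haM : a ∈ Mv G v
          · rcases Finset.mem_insert.1 haM with rfl | haN
            · exact absurd ha hv
            · exact Finset.mem_union_right _ (Finset.mem_inter.2 ⟨ha, haN⟩)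
          · exact Finset.mem_union_left _
              (hdiff ▸ Finset.mem_sdiff.2 ⟨ha, haM⟩)
  · rintro (rfl | ⟨K, hK, rfl⟩)
    · constructor
      · rw [mem_indSets]
        intro u hu w hw hadj
        rcases Finset.mem_insert.1 hu with rfl | huJ <;>
          rcases Finset.mem_insert.1 hw with rfl | hwJ
        · exact G.irrefl hadj
        · exact hJN w hwJ hadj
        · exact hJN u huJ hadj.symm
        · exact hJind u huJ w hwJ hadj
      · ext a
        rw [Finset.mem_sdiff, Finset.mem_insert]
        constructor
        · rintro ⟨rfl | haJ, haM⟩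
          · exact absurd (Finset.mem_insert_self a _) haM
          · exact haJ
        · intro haJ
          exact ⟨Or.inr haJ, hJM a haJ⟩
    · have hKsub : K ⊆ unc G v J := Finset.mem_powerset.1 hK
      have hKN : ∀ u ∈ K, u ∈ G.neighborFinset v := fun u hu =>
        (Finset.mem_filter.1 (hKsub hu)).1
      have hKJ : ∀ u ∈ K, ∀ j ∈ J, ¬ G.Adj u j := fun u hu =>
        (Finset.mem_filter.1 (hKsub hu)).2
      constructor
      · rw [mem_indSets]
        intro u hu w hw hadj
        rcases Finset.mem_union.1 hu with huJ | huK <;>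
          rcases Finset.mem_union.1 hw with hwJ | hwK
        · exact hJind u huJ w hwJ hadj
        · exact hKJ w hwK u huJ hadj.symm
        · exact hKJ u huK w hwJ hadj
        · exact htf {v, u, w} (SimpleGraph.is3Clique_triple_iff.2
            ⟨memN.1 (hKN u huK),
             memN.1 (hKN w hwK), hadj⟩)
      · ext a
        rw [Finset.mem_sdiff, Finset.mem_union]
        constructor
        · rintro ⟨haJ | haK, haM⟩
          · exact haJ
          · exact absurd (Finset.mem_insert_of_mem (hKN a haK)) haM
        · intro haJ
          exact ⟨Or.inl haJ, hJM a haJ⟩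

lemma insert_notin_image {v : V} {J : Finset V} (hJ : J ∈ extSets G v) :
    insert v J ∉ (unc G v J).powerset.image fun K => J ∪ K := by
  obtain ⟨_, hvJ, _⟩ := extSets_spec hJ
  intro h
  obtain ⟨K, hK, hEq⟩ := Finset.mem_image.1 h
  have hv : v ∈ J ∪ K := hEq ▸ Finset.mem_insert_self v J
  rcases Finset.mem_union.1 hv with h' | h'
  · exact hvJ h'
  · exact (SimpleGraph.notMem_neighborFinset_self G v)
      ((Finset.mem_filter.1 (Finset.mem_powerset.1 hK h')).1)

lemma union_inj_on {v : V} {J : Finset V} (hJ : J ∈ extSets G v) :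
    ∀ K ∈ (unc G v J).powerset, ∀ K' ∈ (unc G v J).powerset,
      J ∪ K = J ∪ K' → K = K' := by
  obtain ⟨_, _, hJN⟩ := extSets_spec hJ
  have hdisj : ∀ K ∈ (unc G v J).powerset, ∀ a ∈ K, a ∉ J := by
    intro K hK a haK haJ
    exact hJN a haJ (memN.1
      ((Finset.mem_filter.1 (Finset.mem_powerset.1 hK haK)).1))
  intro K hK K' hK' h
  ext a
  constructor
  · intro ha
    have : a ∈ J ∪ K' := h ▸ Finset.mem_union_right _ ha
    rcases Finset.mem_union.1 this with h' | h'
    · exact absurd h' (hdisj K hK a ha)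
    · exact h'
  · intro ha
    have : a ∈ J ∪ K := h.symm ▸ Finset.mem_union_right _ ha
    rcases Finset.mem_union.1 this with h' | h'
    · exact absurd h' (hdisj K' hK' a ha)
    · exact h'

lemma fiber_decomp (htf : G.CliqueFree 3) (v : V) (f : Finset V → ℝ) :
    ∑ s ∈ indSets G, f s
      = ∑ J ∈ extSets G v,
          (f (insert v J) + ∑ K ∈ (unc G v J).powerset, f (J ∪ K)) := by
  rw [← Finset.sum_fiberwise_of_maps_to (maps_to_ext v) f]
  refine Finset.sum_congr rfl fun J hJ => ?_
  rw [Finset.sum_congr (fiber_eq htf v hJ) (fun _ _ => rfl),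
    Finset.sum_insert (insert_notin_image hJ), Finset.sum_image (union_inj_on hJ)]

end Fiber

section Decomp

variable {V : Type*} [Fintype V] {G : SimpleGraph V}

lemma disj_J_unc {v : V} {J : Finset V} (hJ : J ∈ extSets G v)
    {K : Finset V} (hK : K ∈ (unc G v J).powerset) : Disjoint J K := by
  obtain ⟨_, _, hJN⟩ := extSets_spec hJ
  refine Finset.disjoint_left.2 fun a haJ haK => ?_
  exact hJN a haJ (memN.1
    ((Finset.mem_filter.1 (Finset.mem_powerset.1 hK haK)).1))

lemma v_notin_J {v : V} {J : Finset V} (hJ : J ∈ extSets G v) : v ∉ J :=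
  (extSets_spec hJ).2.1

lemma decompZ (htf : G.CliqueFree 3) (v : V) (t : ℝ) :
    ∑ s ∈ indSets G, t ^ s.card
      = ∑ J ∈ extSets G v, t ^ J.card * (t + (1 + t) ^ (unc G v J).card) := by
  rw [fiber_decomp htf v (fun s => t ^ s.card)]
  refine Finset.sum_congr rfl fun J hJ => ?_
  have h1 : (insert v J).card = J.card + 1 :=
    Finset.card_insert_of_notMem (v_notin_J hJ)
  have h2 : ∀ K ∈ (unc G v J).powerset, t ^ (J ∪ K).card = t ^ J.card * t ^ K.card := by
    intro K hK
    rw [Finset.card_union_of_disjoint (disj_J_unc hJ hK), pow_add]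
  rw [h1, Finset.sum_congr rfl h2, ← Finset.mul_sum, HCAux.sum_pow_powerset, pow_succ]
  ring

lemma decompN (htf : G.CliqueFree 3) (v : V) (t : ℝ) :
    ∑ s ∈ indSets G, ((s ∩ G.neighborFinset v).card : ℝ) * t ^ s.card
      = ∑ J ∈ extSets G v, t ^ J.card *
          (((unc G v J).card : ℝ) * t * (1 + t) ^ ((unc G v J).card - 1)) := by
  rw [fiber_decomp htf v (fun s => ((s ∩ G.neighborFinset v).card : ℝ) * t ^ s.card)]
  refine Finset.sum_congr rfl fun J hJ => ?_
  obtain ⟨_, hvJ, hJN⟩ := extSets_spec hJ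
  have hJNdisj : J ∩ G.neighborFinset v = ∅ := by
    refine Finset.eq_empty_of_forall_notMem fun a ha => ?_
    exact hJN a (Finset.mem_inter.1 ha).1 (memN.1 (Finset.mem_inter.1 ha).2)
  have hins : (insert v J ∩ G.neighborFinset v) = ∅ := by
    rw [Finset.insert_inter_of_notMem (SimpleGraph.notMem_neighborFinset_self G v),
      hJNdisj]
  have h2 : ∀ K ∈ (unc G v J).powerset,
      (((J ∪ K) ∩ G.neighborFinset v).card : ℝ) * t ^ (J ∪ K).card
        = t ^ J.card * ((K.card : ℝ) * t ^ K.card) := by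
    intro K hK
    have hKN : K ⊆ G.neighborFinset v := fun a ha =>
      (Finset.mem_filter.1 (Finset.mem_powerset.1 hK ha)).1
    have : (J ∪ K) ∩ G.neighborFinset v = K := by
      rw [Finset.union_inter_distrib_right, hJNdisj,
        Finset.inter_eq_left.2 hKN, Finset.empty_union]
    rw [this, Finset.card_union_of_disjoint (disj_J_unc hJ hK), pow_add]
    ring
  rw [hins, Finset.sum_congr rfl h2, ← Finset.mul_sum, HCAux.sum_card_pow_powerset]
  simp

lemma decompV (htf : G.CliqueFree 3) (v : V) (t : ℝ) :
    ∑ s ∈ indSets G, (if v ∈ s then t ^ s.card else 0)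
      = ∑ J ∈ extSets G v, t ^ J.card * t := by
  rw [fiber_decomp htf v (fun s => if v ∈ s then t ^ s.card else 0)]
  refine Finset.sum_congr rfl fun J hJ => ?_
  have h1 : (insert v J).card = J.card + 1 :=
    Finset.card_insert_of_notMem (v_notin_J hJ)
  have h2 : ∀ K ∈ (unc G v J).powerset,
      (if v ∈ J ∪ K then t ^ (J ∪ K).card else 0) = 0 := by
    intro K hK
    have hvK : v ∉ K := fun h =>
      (SimpleGraph.notMem_neighborFinset_self G v)
        ((Finset.mem_filter.1 (Finset.mem_powerset.1 hK h)).1)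
    rw [if_neg]
    rw [Finset.mem_union]
    push_neg
    exact ⟨v_notin_J hJ, hvK⟩
  rw [Finset.sum_congr rfl h2, Finset.sum_const, if_pos (Finset.mem_insert_self v J), h1,
    pow_succ]
  simp

lemma sum_card_eq (G : SimpleGraph V) (t : ℝ) :
    ∑ s ∈ indSets G, (s.card : ℝ) * t ^ s.card
      = ∑ v : V, ∑ s ∈ indSets G, (if v ∈ s then t ^ s.card else 0) := by
  rw [Finset.sum_comm]
  refine Finset.sum_congr rfl fun s _ => ?_
  rw [Finset.sum_ite_mem, Finset.univ_inter, Finset.sum_const, nsmul_eq_mul]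

lemma degree_sum_bound (G : SimpleGraph V) {D : ℕ} (hmax : ∀ v, G.degree v ≤ D)
    (s : Finset V) : ∑ v : V, (s ∩ G.neighborFinset v).card ≤ D * s.card := by
  have h1 : ∀ v : V, (s ∩ G.neighborFinset v).card
      = ∑ u ∈ s, (if G.Adj v u then 1 else 0) := by
    intro v
    rw [← Finset.filter_mem_eq_inter, Finset.card_filter]
    refine Finset.sum_congr rfl fun u _ => ?_
    congr 1
    simp [SimpleGraph.mem_neighborFinset]
  calc ∑ v : V, (s ∩ G.neighborFinset v).card
      = ∑ v : V, ∑ u ∈ s, (if G.Adj v u then 1 else 0) :=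
        Finset.sum_congr rfl fun v _ => h1 v
    _ = ∑ u ∈ s, ∑ v : V, (if G.Adj v u then 1 else 0) := Finset.sum_comm
    _ = ∑ u ∈ s, G.degree u := by
        refine Finset.sum_congr rfl fun u _ => ?_
        rw [← Finset.sum_filter]
        have hset : Finset.univ.filter (fun v => G.Adj v u) = G.neighborFinset u := by
          ext v
          simp [SimpleGraph.mem_neighborFinset, G.adj_comm]
        rw [hset, ← SimpleGraph.card_neighborFinset_eq_degree, Finset.card_eq_sum_ones]
    _ ≤ ∑ _u ∈ s, D := Finset.sum_le_sum fun u _ => hmax u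
    _ = s.card * D := by rw [Finset.sum_const, smul_eq_mul]
    _ = D * s.card := mul_comm _ _

lemma sum_inter_le (G : SimpleGraph V) {D : ℕ} (hmax : ∀ v, G.degree v ≤ D)
    {t : ℝ} (ht : 0 ≤ t) :
    ∑ v : V, ∑ s ∈ indSets G, ((s ∩ G.neighborFinset v).card : ℝ) * t ^ s.card
      ≤ D * ∑ s ∈ indSets G, (s.card : ℝ) * t ^ s.card := by
  rw [Finset.sum_comm, Finset.mul_sum]
  refine Finset.sum_le_sum fun s _ => ?_
  have key : ∑ v : V, ((s ∩ G.neighborFinset v).card : ℝ) ≤ (D : ℝ) * s.card := by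
    have := degree_sum_bound G hmax s
    push_cast [← Nat.cast_sum]
    exact_mod_cast this
  calc ∑ v : V, ((s ∩ G.neighborFinset v).card : ℝ) * t ^ s.card
      = (∑ v : V, ((s ∩ G.neighborFinset v).card : ℝ)) * t ^ s.card := by
        rw [Finset.sum_mul]
    _ ≤ ((D : ℝ) * s.card) * t ^ s.card :=
        mul_le_mul_of_nonneg_right key (pow_nonneg ht _)
    _ = (D : ℝ) * ((s.card : ℝ) * t ^ s.card) := by ring

end Decomp

section Star

lemma star_ineq {t x : ℝ} (ht : 0 < t) (hx : 0 < x) {D : ℕ} (hD : 1 ≤ D)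
    (hxe : x * Real.exp x = D * Real.log (1 + t)) (F : ℕ) :
    x * t * (t + (1 + t) ^ F)
      ≤ (1 + t) * (1 + x) * Real.exp x *
          ((1 / (1 + x)) * t
            + (x / ((1 + x) * D)) * ((F : ℝ) * t * (1 + t) ^ (F - 1))) := by
  have hD0 : (0 : ℝ) < D := by exact_mod_cast hD
  have h1x : (0 : ℝ) < 1 + x := by linarith
  have h1t : (0 : ℝ) < 1 + t := by linarith
  have hxex : x ≤ Real.exp x := by
    have := Real.add_one_le_exp x; linarith
  set L := Real.log (1 + t) with hL
  have hL0 : 0 < L := Real.log_pos (by linarith)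
  cases F with
  | zero =>
      have hsimp : (1 + t) * (1 + x) * Real.exp x *
          ((1 / (1 + x)) * t + (x / ((1 + x) * D)) * (((0 : ℕ) : ℝ) * t * (1 + t) ^ (0 - 1)))
          = (1 + t) * Real.exp x * t := by
        field_simp
        ring
      rw [hsimp]
      have : x * t * (t + (1 + t) ^ (0:ℕ)) = x * (t * (1 + t)) := by
        norm_num; ring
      rw [this]
      have h2 : x * (t * (1 + t)) ≤ Real.exp x * (t * (1 + t)) :=
        mul_le_mul_of_nonneg_right hxex (by positivity)
      nlinarith [h2]
  | succ m =>
      have hdiv : x * Real.exp x / (D : ℝ) = L := by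
        rw [hxe]; field_simp
      set X : ℝ := ((m + 1 : ℕ) : ℝ) * L with hX
      have hE : ((1 + t) : ℝ) ^ (m + 1) = Real.exp X := by
        rw [hX, Real.exp_nat_mul, Real.exp_log h1t]
      have hX0 : 0 ≤ X := by positivity
      -- key : exp X * (x - X) ≤ exp x
      have key : Real.exp X * (x - X) ≤ Real.exp x := by
        have h1 : x - X ≤ Real.exp (x - X - 1) := by
          have := Real.add_one_le_exp (x - X - 1); linarith
        have h2 : Real.exp X * (x - X) ≤ Real.exp X * Real.exp (x - X - 1) :=
          mul_le_mul_of_nonneg_left h1 (Real.exp_nonneg _)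
        have h3 : Real.exp X * Real.exp (x - X - 1) = Real.exp (x - 1) := by
          rw [← Real.exp_add]; ring_nf
        have h4 : Real.exp (x - 1) ≤ Real.exp x :=
          Real.exp_le_exp.2 (by linarith)
        linarith
      have hrhs : (1 + t) * (1 + x) * Real.exp x *
          ((1 / (1 + x)) * t
            + (x / ((1 + x) * D)) * (((m + 1 : ℕ) : ℝ) * t * (1 + t) ^ (m + 1 - 1)))
          = (1 + t) * Real.exp x * t + X * t * (1 + t) ^ (m + 1) := by
        have hstep : (1 + t) * (1 + x) * Real.exp x *
            ((x / ((1 + x) * D)) * (((m + 1 : ℕ) : ℝ) * t * (1 + t) ^ m))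
            = (x * Real.exp x / D) * (((m + 1 : ℕ) : ℝ) * t * (1 + t) ^ (m + 1)) := by
          field_simp
          ring
        have hfirst : (1 + t) * (1 + x) * Real.exp x * ((1 / (1 + x)) * t)
            = (1 + t) * Real.exp x * t := by
          field_simp
        rw [Nat.add_sub_cancel, mul_add, hfirst, hstep, hdiv, hX]
        ring
      rw [hrhs, hE]
      have hEpos : 0 < Real.exp X := Real.exp_pos X
      -- goal: x * t * (t + exp X) ≤ (1+t) * exp x * t + X * t * exp X
      have inner : x * (t + Real.exp X) ≤ (1 + t) * Real.exp x + X * Real.exp X := by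
        nlinarith [key, mul_le_mul_of_nonneg_right hxex ht.le]
      calc x * t * (t + Real.exp X) = t * (x * (t + Real.exp X)) := by ring
        _ ≤ t * ((1 + t) * Real.exp x + X * Real.exp X) :=
            mul_le_mul_of_nonneg_left inner ht.le
        _ = (1 + t) * Real.exp x * t + X * t * Real.exp X := by ring

end Star

section Occupancy

variable {V : Type*} [Fintype V] {G : SimpleGraph V}

lemma occupancy (htf : G.CliqueFree 3) {D : ℕ} (hD : 1 ≤ D)
    (hmax : ∀ v, G.degree v ≤ D) {t x : ℝ} (ht : 0 < t) (hx : 0 < x)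
    (hxe : x * Real.exp x = D * Real.log (1 + t)) :
    (Fintype.card V : ℝ) * x * indPoly G t
      ≤ (1 + t) * (1 + x) * Real.exp x
          * ∑ s ∈ indSets G, (s.card : ℝ) * t ^ (s.card - 1) := by
  classical
  have hD0 : (0 : ℝ) < D := by exact_mod_cast hD
  have h1x : (0 : ℝ) < 1 + x := by linarith
  have h1t : (0 : ℝ) < 1 + t := by linarith
  set κ := (1 + t) * (1 + x) * Real.exp x with hκ
  have hκ0 : 0 < κ := by positivity
  set Z := ∑ s ∈ indSets G, t ^ s.card with hZ
  set T1 := ∑ s ∈ indSets G, (s.card : ℝ) * t ^ s.card with hT1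
  -- global identities
  have hA : ∑ v : V, ∑ J ∈ extSets G v, t ^ J.card * t = T1 := by
    rw [hT1, sum_card_eq G t]
    exact Finset.sum_congr rfl fun v _ => (decompV htf v t).symm
  have hB : ∑ v : V, ∑ J ∈ extSets G v, t ^ J.card *
      (((unc G v J).card : ℝ) * t * (1 + t) ^ ((unc G v J).card - 1)) ≤ D * T1 := by
    have h1 : ∑ v : V, ∑ J ∈ extSets G v, t ^ J.card *
        (((unc G v J).card : ℝ) * t * (1 + t) ^ ((unc G v J).card - 1))
        = ∑ v : V, ∑ s ∈ indSets G, ((s ∩ G.neighborFinset v).card : ℝ) * t ^ s.card :=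
      Finset.sum_congr rfl fun v _ => (decompN htf v t).symm
    rw [h1, hT1]
    exact sum_inter_le G hmax ht.le
  have hC : ∑ v : V, ∑ J ∈ extSets G v, t ^ J.card * (t + (1 + t) ^ (unc G v J).card)
      = (Fintype.card V : ℝ) * Z := by
    have h1 : ∀ v : V, ∑ J ∈ extSets G v, t ^ J.card * (t + (1 + t) ^ (unc G v J).card)
        = Z := fun v => (decompZ htf v t).symm
    rw [Finset.sum_congr rfl fun v _ => h1 v, Finset.sum_const, Finset.card_univ,
      nsmul_eq_mul]
  -- pointwise star inequality multiplied by t^J.card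
  have star' : ∀ v : V, ∀ J ∈ extSets G v,
      x * t * (t ^ J.card * (t + (1 + t) ^ (unc G v J).card))
        ≤ κ * ((1 / (1 + x)) * (t ^ J.card * t)
            + (x / ((1 + x) * D)) * (t ^ J.card *
                (((unc G v J).card : ℝ) * t * (1 + t) ^ ((unc G v J).card - 1)))) := by
    intro v J _
    have hs := star_ineq ht hx hD hxe (unc G v J).card
    have h0 : (0 : ℝ) ≤ t ^ J.card := pow_nonneg ht.le _
    calc x * t * (t ^ J.card * (t + (1 + t) ^ (unc G v J).card))
        = t ^ J.card * (x * t * (t + (1 + t) ^ (unc G v J).card)) := by ring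
      _ ≤ t ^ J.card * ((1 + t) * (1 + x) * Real.exp x *
            ((1 / (1 + x)) * t + (x / ((1 + x) * D)) *
              (((unc G v J).card : ℝ) * t * (1 + t) ^ ((unc G v J).card - 1)))) :=
          mul_le_mul_of_nonneg_left hs h0
      _ = κ * ((1 / (1 + x)) * (t ^ J.card * t)
            + (x / ((1 + x) * D)) * (t ^ J.card *
                (((unc G v J).card : ℝ) * t * (1 + t) ^ ((unc G v J).card - 1)))) := by
          rw [hκ]; ring
  -- assemble
  have main : (Fintype.card V : ℝ) * x * t * Z ≤ κ * T1 := by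
    have step1 : (Fintype.card V : ℝ) * x * t * Z
        = ∑ v : V, ∑ J ∈ extSets G v,
            x * t * (t ^ J.card * (t + (1 + t) ^ (unc G v J).card)) := by
      have e1 : ∀ v : V, ∑ J ∈ extSets G v,
          x * t * (t ^ J.card * (t + (1 + t) ^ (unc G v J).card))
          = x * t * ∑ J ∈ extSets G v, t ^ J.card * (t + (1 + t) ^ (unc G v J).card) := by
        intro v
        rw [Finset.mul_sum]
      rw [Finset.sum_congr rfl fun v _ => e1 v, ← Finset.mul_sum, hC]
      ring
    have step2 : ∑ v : V, ∑ J ∈ extSets G v,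
        κ * ((1 / (1 + x)) * (t ^ J.card * t)
          + (x / ((1 + x) * D)) * (t ^ J.card *
              (((unc G v J).card : ℝ) * t * (1 + t) ^ ((unc G v J).card - 1))))
        = κ * (1 / (1 + x)) * (∑ v : V, ∑ J ∈ extSets G v, t ^ J.card * t)
          + κ * (x / ((1 + x) * D)) * (∑ v : V, ∑ J ∈ extSets G v, t ^ J.card *
              (((unc G v J).card : ℝ) * t * (1 + t) ^ ((unc G v J).card - 1))) := by
      rw [Finset.mul_sum, Finset.mul_sum, ← Finset.sum_add_distrib]
      refine Finset.sum_congr rfl fun v _ => ?_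
      rw [Finset.mul_sum, Finset.mul_sum, ← Finset.sum_add_distrib]
      refine Finset.sum_congr rfl fun J _ => ?_
      ring
    have hq0 : 0 ≤ κ * (x / ((1 + x) * D)) := by positivity
    calc (Fintype.card V : ℝ) * x * t * Z
        = ∑ v : V, ∑ J ∈ extSets G v,
            x * t * (t ^ J.card * (t + (1 + t) ^ (unc G v J).card)) := step1
      _ ≤ ∑ v : V, ∑ J ∈ extSets G v,
            κ * ((1 / (1 + x)) * (t ^ J.card * t)
              + (x / ((1 + x) * D)) * (t ^ J.card *
                  (((unc G v J).card : ℝ) * t * (1 + t) ^ ((unc G v J).card - 1)))) :=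
          Finset.sum_le_sum fun v _ => Finset.sum_le_sum fun J hJ => star' v J hJ
      _ = κ * (1 / (1 + x)) * (∑ v : V, ∑ J ∈ extSets G v, t ^ J.card * t)
          + κ * (x / ((1 + x) * D)) * (∑ v : V, ∑ J ∈ extSets G v, t ^ J.card *
              (((unc G v J).card : ℝ) * t * (1 + t) ^ ((unc G v J).card - 1))) := step2
      _ ≤ κ * (1 / (1 + x)) * T1 + κ * (x / ((1 + x) * D)) * (D * T1) := by
          rw [hA]
          exact add_le_add le_rfl (mul_le_mul_of_nonneg_left hB hq0)
      _ = κ * T1 := by field_simp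
  -- convert T1 = t * Zd and cancel t
  have hT1' : T1 = t * ∑ s ∈ indSets G, (s.card : ℝ) * t ^ (s.card - 1) := by
    rw [hT1, Finset.mul_sum]
    refine Finset.sum_congr rfl fun s _ => ?_
    cases hc : s.card with
    | zero => simp
    | succ m =>
        rw [Nat.add_sub_cancel, pow_succ]
        push_cast
        ring
  have hfin : t * ((Fintype.card V : ℝ) * x * indPoly G t)
      ≤ t * (κ * ∑ s ∈ indSets G, (s.card : ℝ) * t ^ (s.card - 1)) := by
    have : indPoly G t = Z := rfl
    calc t * ((Fintype.card V : ℝ) * x * indPoly G t)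
        = (Fintype.card V : ℝ) * x * t * Z := by rw [this]; ring
      _ ≤ κ * T1 := main
      _ = t * (κ * ∑ s ∈ indSets G, (s.card : ℝ) * t ^ (s.card - 1)) := by
          rw [hT1']; ring
  exact le_of_mul_le_mul_left hfin ht

end Occupancy

section CalcPart

variable {V : Type*} [Fintype V] (G : SimpleGraph V)

lemma empty_mem_indSets : ∅ ∈ indSets G := by
  rw [mem_indSets]
  simp

lemma hasDerivAt_indPoly (t : ℝ) :
    HasDerivAt (indPoly G) (∑ s ∈ indSets G, (s.card : ℝ) * t ^ (s.card - 1)) t := by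
  have h : ∀ s ∈ indSets G,
      HasDerivAt (fun x : ℝ => x ^ s.card) ((s.card : ℝ) * t ^ (s.card - 1)) t :=
    fun s _ => hasDerivAt_pow s.card t
  exact HasDerivAt.fun_sum h

lemma one_le_indPoly {t : ℝ} (ht : 0 ≤ t) : 1 ≤ indPoly G t := by
  have h := Finset.single_le_sum (f := fun s : Finset V => t ^ s.card)
    (fun s _ => pow_nonneg ht _) (empty_mem_indSets G)
  simpa [indPoly] using h

lemma indPoly_zero : indPoly G 0 = 1 := by
  rw [indPoly, Finset.sum_eq_single (∅ : Finset V)]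
  · simp
  · intro s _ hne
    rw [zero_pow]
    simpa using hne
  · intro h
    exact absurd (empty_mem_indSets G) h

end CalcPart


theorem stmt14 {V : Type*} [Fintype V] [Nonempty V] (G : SimpleGraph V) (D : ℕ)
    (hD1 : 1 ≤ D) (hmax : ∀ v, G.degree v ≤ D) (hex : ∃ v, G.degree v = D)
    (htf : G.CliqueFree 3) (l w : ℝ) (hl : 0 < l) (hw : 0 < w)
    (hWe : w * Real.exp w = D * Real.log (1 + l)) :
    max ((1 + l) ^ D)
        (Real.exp (((Fintype.card V : ℝ) / (2 * D)) * w ^ 2)) ≤ indPoly G l := by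
  classical
  have hD0 : (0 : ℝ) < D := by exact_mod_cast hD1
  have h1l : (0 : ℝ) < 1 + l := by linarith
  -- Bound 1 : (1+l)^D ≤ indPoly G l
  obtain ⟨v, hv⟩ := hex
  have hsub : (G.neighborFinset v).powerset ⊆ indSets G := by
    intro K hK
    rw [mem_indSets]
    intro u hu x hx hadj
    have h1 : G.Adj v u := memN.1 (Finset.mem_powerset.1 hK hu)
    have h2 : G.Adj v x := memN.1 (Finset.mem_powerset.1 hK hx)
    exact htf {v, u, x} (SimpleGraph.is3Clique_triple_iff.2 ⟨h1, h2, hadj⟩)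
  have b1 : (1 + l) ^ D ≤ indPoly G l := by
    have h1 : ∑ K ∈ (G.neighborFinset v).powerset, l ^ K.card = (1 + l) ^ D := by
      have hcard : (G.neighborFinset v).card = D := by
        rw [SimpleGraph.card_neighborFinset_eq_degree, hv]
      rw [HCAux.sum_pow_powerset, hcard]
    calc (1 + l) ^ D = ∑ K ∈ (G.neighborFinset v).powerset, l ^ K.card := h1.symm
      _ ≤ ∑ s ∈ indSets G, l ^ s.card :=
          Finset.sum_le_sum_of_subset_of_nonneg hsub
            (fun s _ _ => pow_nonneg hl.le _)
      _ = indPoly G l := rfl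
  -- Bound 2
  set τ : ℝ → ℝ := fun y => Real.exp (y * Real.exp y / D) - 1 with hτdef
  have hτderiv : ∀ y : ℝ, HasDerivAt τ
      (Real.exp (y * Real.exp y / D) * ((Real.exp y + y * Real.exp y) / D)) y := by
    intro y
    have h1 : HasDerivAt (fun y : ℝ => y * Real.exp y)
        (1 * Real.exp y + y * Real.exp y) y :=
      (hasDerivAt_id y).mul (Real.hasDerivAt_exp y)
    have h2 := h1.div_const (D : ℝ)
    have h4 := h2.exp
    have h5 := h4.sub_const 1
    simpa only [one_mul] using h5
  have hτ0 : τ 0 = 0 := by simp [hτdef]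
  have hτw : τ w = l := by
    have h1 : w * Real.exp w / D = Real.log (1 + l) := by
      rw [hWe]; field_simp
    show Real.exp (w * Real.exp w / D) - 1 = l
    rw [h1, Real.exp_log h1l]; ring
  have hτ_nonneg : ∀ y : ℝ, 0 ≤ y → 0 ≤ τ y := by
    intro y hy
    have h1 : (1 : ℝ) ≤ Real.exp (y * Real.exp y / D) := by
      rw [← Real.exp_zero]
      apply Real.exp_le_exp.2
      positivity
    show 0 ≤ Real.exp (y * Real.exp y / D) - 1
    linarith
  have hτ_pos : ∀ y : ℝ, 0 < y → 0 < τ y := by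
    intro y hy
    have h1 : (1 : ℝ) < Real.exp (y * Real.exp y / D) := by
      rw [← Real.exp_zero]
      apply Real.exp_lt_exp.2
      positivity
    show 0 < Real.exp (y * Real.exp y / D) - 1
    linarith
  set ψ : ℝ → ℝ := fun y =>
    Real.log (indPoly G (τ y)) - ((Fintype.card V : ℝ) / (2 * D)) * y ^ 2 with hψdef
  have hψderiv : ∀ y : ℝ, 0 ≤ y → HasDerivAt ψ
      ((∑ s ∈ indSets G, (s.card : ℝ) * (τ y) ^ (s.card - 1)) *
          (Real.exp (y * Real.exp y / D) * ((Real.exp y + y * Real.exp y) / D))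
            / indPoly G (τ y)
        - ((Fintype.card V : ℝ) / (2 * D)) * (2 * y)) y := by
    intro y hy
    have hZpos : 0 < indPoly G (τ y) :=
      lt_of_lt_of_le one_pos (one_le_indPoly G (hτ_nonneg y hy))
    have h1 := (hasDerivAt_indPoly G (τ y)).comp y (hτderiv y)
    have h2 := h1.log hZpos.ne'
    have h3 : HasDerivAt (fun y : ℝ => ((Fintype.card V : ℝ) / (2 * D)) * y ^ 2)
        (((Fintype.card V : ℝ) / (2 * D)) * (2 * y)) y := by
      have h := (hasDerivAt_pow 2 y).const_mul ((Fintype.card V : ℝ) / (2 * D))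
      simpa using h
    exact h2.sub h3
  have hmono : MonotoneOn ψ (Set.Icc 0 w) := by
    apply monotoneOn_of_deriv_nonneg (convex_Icc 0 w)
    · intro y hy
      exact ((hψderiv y hy.1).differentiableAt.continuousAt).continuousWithinAt
    · rw [interior_Icc]
      intro y hy
      exact ((hψderiv y hy.1.le).differentiableAt).differentiableWithinAt
    · rw [interior_Icc]
      intro y hy
      obtain ⟨hy0, _⟩ := hy
      have hd := hψderiv y hy0.le
      rw [hd.deriv]
      have ht : 0 < τ y := hτ_pos y hy0
      have hZpos : 0 < indPoly G (τ y) :=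
        lt_of_lt_of_le one_pos (one_le_indPoly G ht.le)
      have hexp1 : Real.exp (y * Real.exp y / D) = 1 + τ y := by
        show Real.exp (y * Real.exp y / D) = 1 + (Real.exp (y * Real.exp y / D) - 1)
        ring
    -- occupancy input
      have hxe : y * Real.exp y = D * Real.log (1 + τ y) := by
        rw [← hexp1, Real.log_exp]
        field_simp
      have hocc := occupancy htf hD1 hmax ht hy0 hxe
      have hC : ((Fintype.card V : ℝ) / (2 * D)) * (2 * y) = (Fintype.card V : ℝ) * y / D := by
        field_simp
      rw [hC, sub_nonneg, div_le_div_iff₀ hD0 hZpos]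
      calc (Fintype.card V : ℝ) * y * indPoly G (τ y)
          ≤ (1 + τ y) * (1 + y) * Real.exp y
              * ∑ s ∈ indSets G, (s.card : ℝ) * (τ y) ^ (s.card - 1) := hocc
        _ = (∑ s ∈ indSets G, (s.card : ℝ) * (τ y) ^ (s.card - 1)) *
              (Real.exp (y * Real.exp y / D) * ((Real.exp y + y * Real.exp y) / D)) * D := by
            rw [hexp1]
            rw [mul_div_assoc', mul_div_assoc', div_mul_cancel₀ _ hD0.ne']
            ring
  have hψ0 : ψ 0 = 0 := by
    show Real.log (indPoly G (τ 0)) - ((Fintype.card V : ℝ) / (2 * D)) * 0 ^ 2 = 0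
    rw [hτ0, indPoly_zero]
    simp
  have hkey : 0 ≤ Real.log (indPoly G l) - ((Fintype.card V : ℝ) / (2 * D)) * w ^ 2 := by
    have h := hmono (Set.mem_Icc.2 ⟨le_refl (0:ℝ), hw.le⟩)
      (Set.mem_Icc.2 ⟨hw.le, le_refl w⟩) hw.le
    rw [hψ0] at h
    have : ψ w = Real.log (indPoly G l) - ((Fintype.card V : ℝ) / (2 * D)) * w ^ 2 := by
      show Real.log (indPoly G (τ w)) - _ = _
      rw [hτw]
    linarith [this ▸ h]
  have b2 : Real.exp (((Fintype.card V : ℝ) / (2 * D)) * w ^ 2) ≤ indPoly G l := by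
    have hZl : 0 < indPoly G l :=
      lt_of_lt_of_le one_pos (one_le_indPoly G hl.le)
    rw [← Real.le_log_iff_exp_le hZl]
    linarith
  exact max_le b1 b2
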